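/- Let G be a simple graph on n vertices with a designated Hamiltonian cycle C, let m ≥ 1, let K > 0, and let S be a set of K·m independent chords of G. Then at least one of the following holds: (1) P_S contains a chain of size K·m^{1/3}; (2) Q_S contains a chain of size m^{1/3}; (3) there is a subset of S of size m^{1/3} that is simultaneously an antichain in P_S and an antichain in Q_S. Moreover, in cases (2) and (3), G contains a nontrivial cycle of length at least n − n/m^{1/3}. -/

import Mathlib

/-!  We formalize "a graph `G` on `n` vertices with a designated Hamiltonian cycle `C`
(with a fixed cyclic orientation)" by taking the vertex set to be `ZMod n` (with `3 ≤ n`)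
and the designated Hamiltonian cycle to be `0, 1, 2, ..., n-1, 0`, which is a Hamiltonian
cycle of `G` thanks to the hypothesis `∀ i : ZMod n, G.Adj i (i + 1)`.  -/

/-- The length of the path from `x` to `y` along the designated Hamiltonian cycle,
following the fixed orientation; this is `d_C(x, y)`. -/
def dC {n : ℕ} (x y : ZMod n) : ℕ := (y - x).val

/-- `CBtw x y z` formalizes `x ≺ y ≺ z`: traversing the cycle starting from `x`
(in the fixed orientation), one meets `y` (strictly after `x`) and then `z`. -/
def CBtw {n : ℕ} (x y z : ZMod n) : Prop := 0 < dC x y ∧ dC x y < dC x z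

/-- The set of vertices on the path from `a` to `b` along the cycle (following the
orientation), inclusive of both endpoints.  The two *domains* of a chord `{a, b}` are
`arc a b` and `arc b a`. -/
def arc {n : ℕ} (a b : ZMod n) : Set (ZMod n) := {v | dC a v ≤ dC a b}

/-- The edge set of the designated Hamiltonian cycle. -/
def stdEdges (n : ℕ) : Set (Sym2 (ZMod n)) := {e | ∃ i : ZMod n, e = s(i, i + 1)}

/-- `{a, b}` is a chord of `G`: an edge of `G` not belonging to the designated
Hamiltonian cycle. -/
def IsChordPair {n : ℕ} (G : SimpleGraph (ZMod n)) (a b : ZMod n) : Prop :=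
  G.Adj a b ∧ s(a, b) ∉ stdEdges n

/-- The chords `{a, b}` and `{x, y}` interlace: their endpoints are distinct and appear
in alternating order around the cycle. -/
def Interlace {n : ℕ} (a b x y : ZMod n) : Prop :=
  (CBtw a x b ∧ CBtw b y a) ∨ (CBtw a y b ∧ CBtw b x a)

/-- `G` contains a cycle, distinct from the designated Hamiltonian cycle
(i.e. a *nontrivial* cycle), of length at least `L`. -/
def HasNontrivialCycleOfLength {n : ℕ} (G : SimpleGraph (ZMod n)) (L : ℝ) : Prop :=
  ∃ (w : ZMod n) (W : G.Walk w w), W.IsCycle ∧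
    {e | e ∈ W.edges} ≠ stdEdges n ∧ L ≤ (W.length : ℝ)

/-- `S` is a set of independent chords of `G`: every element is a chord, and no two
distinct chords in `S` share an endpoint.  (Chords are recorded as ordered pairs of
endpoints.) -/
def IndepChords {n : ℕ} (G : SimpleGraph (ZMod n)) (S : Finset (ZMod n × ZMod n)) : Prop :=
  (∀ e ∈ S, IsChordPair G e.1 e.2) ∧
  (∀ e ∈ S, ∀ e' ∈ S, e ≠ e' →
    e.1 ≠ e'.1 ∧ e.1 ≠ e'.2 ∧ e.2 ≠ e'.1 ∧ e.2 ≠ e'.2)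

/-- The *interior* of the chord `{a, b}` with respect to the fixed cycle edge
`f = {f0, f0 + 1}`: the domain of the chord containing both endpoints of `f`. -/
def interiorD {n : ℕ} (f0 a b : ZMod n) : Set (ZMod n) :=
  if dC a f0 ≤ dC a b ∧ dC a (f0 + 1) ≤ dC a b then arc a b else arc b a

/-- The *exterior* of the chord `{a, b}` with respect to the fixed cycle edge
`f = {f0, f0 + 1}`: the domain of the chord other than its interior. -/
def exteriorD {n : ℕ} (f0 a b : ZMod n) : Set (ZMod n) :=
  if dC a f0 ≤ dC a b ∧ dC a (f0 + 1) ≤ dC a b then arc b a else arc a b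

/-- The position of `v` in the linear order `L` on the vertices obtained by starting at
the endpoint `f0 + 1` of the fixed cycle edge `f = {f0, f0 + 1}` and following the cycle
to its other endpoint `f0`. -/
def posL {n : ℕ} (f0 v : ZMod n) : ℕ := dC (f0 + 1) v

/-- The strict order of the poset `P_S`:  `e1 < e2` iff the interior of `e1` is
(strictly) contained in the interior of `e2`. -/
def PRel {n : ℕ} (f0 : ZMod n) (e1 e2 : ZMod n × ZMod n) : Prop :=
  interiorD f0 e1.1 e1.2 ⊂ interiorD f0 e2.1 e2.2

/-- The strict order of the poset `Q_S`:  `e1 < e2` iff both endpoints of `e1` precede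
both endpoints of `e2` in the linear order `L`. -/
def QRel {n : ℕ} (f0 : ZMod n) (e1 e2 : ZMod n × ZMod n) : Prop :=
  posL f0 e1.1 < posL f0 e2.1 ∧ posL f0 e1.1 < posL f0 e2.2 ∧
  posL f0 e1.2 < posL f0 e2.1 ∧ posL f0 e1.2 < posL f0 e2.2

/-- `A` is a chain in the poset `P_S`. -/
def IsChainP {n : ℕ} (f0 : ZMod n) (A : Finset (ZMod n × ZMod n)) : Prop :=
  ∀ e ∈ A, ∀ e' ∈ A, e ≠ e' → PRel f0 e e' ∨ PRel f0 e' e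

/-- `A` is a chain in the poset `Q_S`. -/
def IsChainQ {n : ℕ} (f0 : ZMod n) (A : Finset (ZMod n × ZMod n)) : Prop :=
  ∀ e ∈ A, ∀ e' ∈ A, e ≠ e' → QRel f0 e e' ∨ QRel f0 e' e

/-- `A` is an antichain in the poset `P_S`. -/
def IsAntichainP {n : ℕ} (f0 : ZMod n) (A : Finset (ZMod n × ZMod n)) : Prop :=
  ∀ e ∈ A, ∀ e' ∈ A, e ≠ e' → ¬ PRel f0 e e' ∧ ¬ PRel f0 e' e

/-- `A` is an antichain in the poset `Q_S`. -/
def IsAntichainQ {n : ℕ} (f0 : ZMod n) (A : Finset (ZMod n × ZMod n)) : Prop :=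
  ∀ e ∈ A, ∀ e' ∈ A, e ≠ e' → ¬ QRel f0 e e' ∧ ¬ QRel f0 e' e

section Basics
variable {n : ℕ} [NeZero n]

lemma dC_lt (x y : ZMod n) : dC x y < n := ZMod.val_lt _

lemma dC_self (x : ZMod n) : dC x x = 0 := by simp [dC]

lemma dC_eq_zero_iff {x y : ZMod n} : dC x y = 0 ↔ x = y := by
  constructor
  · intro h
    have : (y - x) = 0 := by
      have := (ZMod.val_eq_zero (y - x)).mp h
      exact this
    have : y = x := by linear_combination this
    exact this.symm
  · rintro rfl; exact dC_self x

lemma add_dC (x y : ZMod n) : x + (dC x y : ZMod n) = y := by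
  simp [dC, ZMod.natCast_val, ZMod.cast_id]

/-- key triangle fact -/
lemma dC_add_dC (a x v : ZMod n) :
    dC a x + dC x v = dC a v ∨ dC a x + dC x v = dC a v + n := by
  have h : (x - a) + (v - x) = v - a := by ring
  have hv := ZMod.val_add (x - a) (v - x)
  rw [h] at hv
  have h1 : dC a x < n := dC_lt a x
  have h2 : dC x v < n := dC_lt x v
  have h3 : dC a v < n := dC_lt a v
  unfold dC at *
  rcases Nat.lt_or_ge ((x - a).val + (v - x).val) n with hlt | hge
  · left; rw [Nat.mod_eq_of_lt hlt] at hv; omega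
  · right
    have : (x - a).val + (v - x).val - n < n := by omega
    have := Nat.mod_eq_sub_mod hge ▸ hv
    rw [Nat.mod_eq_sub_mod hge, Nat.mod_eq_of_lt (by omega)] at hv
    omega

lemma dC_inj_left {a x y : ZMod n} (h : dC a x = dC a y) : x = y := by
  have hx := add_dC a x
  have hy := add_dC a y
  rw [h] at hx; rw [hx] at hy; exact hy

end Basics

set_option linter.unusedSectionVars false

section Walks
variable {n : ℕ} [NeZero n] {G : SimpleGraph (ZMod n)} (hC : ∀ i : ZMod n, G.Adj i (i + 1))

/-- walk along C from x of length l -/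
def cpath (x : ZMod n) : (l : ℕ) → G.Walk x (x + l)
  | 0 => (SimpleGraph.Walk.nil).copy rfl (by push_cast; ring)
  | (l+1) => ((cpath x l).concat (hC (x + l))).copy rfl (by push_cast; ring)

lemma cpath_length (x : ZMod n) (l : ℕ) : (cpath hC x l).length = l := by
  induction l with
  | zero => simp [cpath]
  | succ l ih => simp [cpath, SimpleGraph.Walk.length_concat, ih]

lemma cpath_support (x : ZMod n) (l : ℕ) :
    (cpath hC x l).support = List.map (fun i : ℕ => x + (i:ZMod n)) (List.range (l+1)) := by
  induction l with
  | zero =>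
      rw [cpath, SimpleGraph.Walk.support_copy, SimpleGraph.Walk.support_nil, List.range_succ, List.range_zero]
      simp
  | succ l ih =>
      rw [cpath, SimpleGraph.Walk.support_copy, SimpleGraph.Walk.support_concat, ih,
        List.range_succ (n := l + 1), List.map_append]
      congr 1
      simp only [List.map_cons, List.map_nil]
      congr 1
      push_cast; ring

lemma cpath_edges (x : ZMod n) (l : ℕ) :
    (cpath hC x l).edges = List.map (fun i : ℕ => s(x + (i:ZMod n), x + (i:ZMod n) + 1)) (List.range l) := by
  induction l with
  | zero =>
      rw [cpath, SimpleGraph.Walk.edges_copy, SimpleGraph.Walk.edges_nil, List.range_zero,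
        List.map_nil]
  | succ l ih =>
      rw [cpath, SimpleGraph.Walk.edges_copy, SimpleGraph.Walk.edges_concat, ih,
        List.range_succ (n := l), List.map_append, List.concat_eq_append]
      simp

/-- the walk along C from x to y -/
def walkArc (x y : ZMod n) : G.Walk x y := (cpath hC x (dC x y)).copy rfl (add_dC x y)

lemma walkArc_length (x y : ZMod n) : (walkArc hC x y).length = dC x y := by
  rw [walkArc, SimpleGraph.Walk.length_copy, cpath_length]

lemma walkArc_support (x y : ZMod n) :
    (walkArc hC x y).support = List.map (fun i : ℕ => x + (i:ZMod n)) (List.range (dC x y + 1)) := by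
  rw [walkArc, SimpleGraph.Walk.support_copy, cpath_support]

lemma walkArc_edges (x y : ZMod n) :
    (walkArc hC x y).edges
      = List.map (fun i : ℕ => s(x + (i:ZMod n), x + (i:ZMod n) + 1)) (List.range (dC x y)) := by
  rw [walkArc, SimpleGraph.Walk.edges_copy, cpath_edges]

lemma dC_add_nat {x : ZMod n} {i : ℕ} (hi : i < n) : dC x (x + (i:ZMod n)) = i := by
  unfold dC
  have h : x + (i:ZMod n) - x = (i:ZMod n) := by ring
  rw [h, ZMod.val_natCast_of_lt hi]

lemma mem_walkArc_support {x y v : ZMod n} :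
    v ∈ (walkArc hC x y).support ↔ dC x v ≤ dC x y := by
  rw [walkArc_support]
  simp only [List.mem_map, List.mem_range]
  constructor
  · rintro ⟨i, hi, rfl⟩
    have hdn : dC x y < n := dC_lt x y
    have hin : i < n := by omega
    rw [dC_add_nat hin]; omega
  · intro h
    exact ⟨dC x v, by omega, add_dC x v⟩

lemma walkArc_support_nodup (x y : ZMod n) : (walkArc hC x y).support.Nodup := by
  rw [walkArc_support]
  apply List.Nodup.map_on
  · intro i hi j hj hij
    simp only [List.mem_range] at hi hj
    have hd : dC x y < n := dC_lt x y
    have hi' : i < n := by omega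
    have hj' : j < n := by omega
    have h2 : dC x (x + (i:ZMod n)) = i := dC_add_nat hi'
    rw [hij, dC_add_nat hj'] at h2
    omega
  · exact List.nodup_range

end Walks

section Chords
variable {n : ℕ} [NeZero n] {G : SimpleGraph (ZMod n)} (hC : ∀ i : ZMod n, G.Adj i (i + 1))

lemma std_inj (hn3 : 3 ≤ n) {u v : ZMod n} (h : s(u, u+1) = s(v, v+1)) : u = v := by
  rcases Sym2.eq_iff.mp h with ⟨h1, _⟩ | ⟨h1, h2⟩
  · exact h1
  · exfalso
    have hu : ((2:ℕ) : ZMod n) = 0 := by push_cast; linear_combination h2 - h1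
    have hdvd := (ZMod.natCast_eq_zero_iff 2 n).mp hu
    have := Nat.le_of_dvd (by norm_num) hdvd
    omega

lemma dC_comp {a b : ZMod n} (hab : a ≠ b) : dC a b + dC b a = n := by
  rcases dC_add_dC a b a with h | h <;> rw [dC_self] at h
  · have h1 : dC a b = 0 := by omega
    exact absurd (dC_eq_zero_iff.mp h1) hab
  · omega

lemma chord_dist {a b : ZMod n} (hab : a ≠ b) (hstd : s(a, b) ∉ stdEdges n) :
    2 ≤ dC a b ∧ 2 ≤ dC b a := by
  have h1 : dC a b ≠ 0 := fun h => hab (dC_eq_zero_iff.mp h)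
  have h2 : dC b a ≠ 0 := fun h => hab (dC_eq_zero_iff.mp h).symm
  have h3 : dC a b ≠ 1 := by
    intro h
    apply hstd
    have : b = a + 1 := by rw [← add_dC a b, h]; push_cast; ring
    exact ⟨a, by rw [this]⟩
  have h4 : dC b a ≠ 1 := by
    intro h
    apply hstd
    have : a = b + 1 := by rw [← add_dC b a, h]; push_cast; ring
    exact ⟨b, by rw [this, Sym2.eq_swap]⟩
  omega

lemma walkArc_edges_nodup (hn3 : 3 ≤ n) (x y : ZMod n) : (walkArc hC x y).edges.Nodup := by
  rw [walkArc_edges]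
  apply List.Nodup.map_on
  · intro i hi j hj hij
    simp only [List.mem_range] at hi hj
    have hd : dC x y < n := dC_lt x y
    have hi' : i < n := by omega
    have hj' : j < n := by omega
    have := std_inj hn3 hij
    have h2 : dC x (x + (i:ZMod n)) = i := dC_add_nat hi'
    rw [this, dC_add_nat hj'] at h2
    omega
  · exact List.nodup_range

lemma walkArc_edges_std {x y : ZMod n} {e : Sym2 (ZMod n)}
    (he : e ∈ (walkArc hC x y).edges) : e ∈ stdEdges n := by
  rw [walkArc_edges] at he
  simp only [List.mem_map, List.mem_range] at he
  obtain ⟨i, _, rfl⟩ := he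
  exact ⟨x + (i:ZMod n), rfl⟩

lemma dC_offset {a x : ZMod n} {i : ℕ} (h : dC a x + i < n) :
    dC a (x + (i:ℕ)) = dC a x + i := by
  have hx := add_dC a x
  have hxi : x + ((i:ℕ) : ZMod n) = a + (((dC a x + i : ℕ)) : ZMod n) := by
    conv_lhs => rw [← hx]
    push_cast; ring
  rw [hxi, dC_add_nat h]

include hC in
/-- single-chord cycle -/
lemma cycle_one (hn3 : 3 ≤ n) {a b : ZMod n} (hadj : G.Adj a b)
    (hstd : s(a, b) ∉ stdEdges n) :
    ∃ (w : ZMod n) (W : G.Walk w w), W.IsCycle ∧ {e | e ∈ W.edges} ≠ stdEdges n ∧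
      W.length = n - dC a b + 1 := by
  have hab : a ≠ b := hadj.ne
  have hcd := chord_dist hab hstd
  have hcomp := dC_comp hab
  refine ⟨b, (walkArc hC b a).append (SimpleGraph.Walk.cons hadj SimpleGraph.Walk.nil), ?_, ?_, ?_⟩
  · constructor
    · constructor
      · -- trail
        constructor
        rw [SimpleGraph.Walk.edges_append, SimpleGraph.Walk.edges_cons,
          SimpleGraph.Walk.edges_nil, List.nodup_append']
        refine ⟨walkArc_edges_nodup hC hn3 b a, List.nodup_singleton _, ?_⟩
        intro e he he'
        simp only [List.mem_singleton] at he'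
        subst he'
        exact hstd (walkArc_edges_std hC he)
      · -- ne nil
        intro h
        have := congrArg SimpleGraph.Walk.length h
        rw [SimpleGraph.Walk.length_append, walkArc_length, SimpleGraph.Walk.length_cons,
          SimpleGraph.Walk.length_nil] at this
        omega
    · -- support tail nodup
      rw [SimpleGraph.Walk.support_append, SimpleGraph.Walk.support_cons,
        SimpleGraph.Walk.support_nil]
      rw [SimpleGraph.Walk.support_eq_cons (walkArc hC b a)]
      simp only [List.tail_cons, List.cons_append, List.nil_append]
      have hnd := walkArc_support_nodup hC b a
      rw [SimpleGraph.Walk.support_eq_cons (walkArc hC b a)] at hnd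
      rw [List.nodup_cons] at hnd
      rw [List.nodup_append']
      refine ⟨hnd.2, List.nodup_singleton _, ?_⟩
      intro v hv hv'
      simp only [List.mem_singleton] at hv'
      subst hv'
      exact hnd.1 hv
  · intro h
    have : s(a, b) ∈ {e | e ∈ ((walkArc hC b a).append
        (SimpleGraph.Walk.cons hadj SimpleGraph.Walk.nil)).edges} := by
      simp [SimpleGraph.Walk.edges_append, SimpleGraph.Walk.edges_cons]
    rw [h] at this
    exact hstd this
  · rw [SimpleGraph.Walk.length_append, walkArc_length, SimpleGraph.Walk.length_cons,
      SimpleGraph.Walk.length_nil]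
    omega

end Chords

section TwoChord
variable {n : ℕ} [NeZero n] {G : SimpleGraph (ZMod n)} (hC : ∀ i : ZMod n, G.Adj i (i + 1))

lemma mem_walkArc_edges {x y : ZMod n} {e : Sym2 (ZMod n)}
    (he : e ∈ (walkArc hC x y).edges) :
    ∃ i : ℕ, i < dC x y ∧ e = s(x + (i:ℕ), x + (i:ℕ) + 1) := by
  rw [walkArc_edges] at he
  simp only [List.mem_map, List.mem_range] at he
  obtain ⟨i, hi, rfl⟩ := he
  exact ⟨i, hi, rfl⟩

include hC in
/-- two crossing chords cycle: keeps the arcs `x → b` and `y → a`. -/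
lemma cycle_two (hn3 : 3 ≤ n) {a b x y : ZMod n}
    (hab : G.Adj a b) (hab_std : s(a, b) ∉ stdEdges n)
    (hxy : G.Adj x y) (hxy_std : s(x, y) ∉ stdEdges n)
    (h1 : 0 < dC a x) (h2 : dC a x < dC a b) (h3 : dC a b < dC a y) :
    ∃ (w : ZMod n) (W : G.Walk w w), W.IsCycle ∧ {e | e ∈ W.edges} ≠ stdEdges n ∧
      W.length = (dC a b - dC a x) + (n - dC a y) + 2 := by
  have hdablt : dC a b < n := dC_lt a b
  have hdaylt : dC a y < n := dC_lt a y
  have hdaxlt : dC a x < n := dC_lt a x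
  have hdxb : dC x b = dC a b - dC a x := by
    have hlt : dC x b < n := dC_lt x b
    rcases dC_add_dC a x b with h | h <;> omega
  have hdya : dC y a = n - dC a y := by
    have hlt : dC y a < n := dC_lt y a
    rcases dC_add_dC a y a with h | h <;> rw [dC_self] at h <;> omega
  have hdyx : dC y x = n - dC a y + dC a x := by
    have hlt : dC y x < n := dC_lt y x
    rcases dC_add_dC a y x with h | h <;> omega
  -- distinctness
  have hby : b ≠ y := fun h => by rw [h] at h3; omega
  have hax : a ≠ x := fun h => by rw [dC_eq_zero_iff.mpr h] at h1; omega
  have hbx : b ≠ x := fun h => by rw [h] at h2; omega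
  have hay : a ≠ y := by
    intro h
    rw [dC_eq_zero_iff.mpr h] at h3; omega
  -- the walk
  set W : G.Walk x x := (walkArc hC x b).append (SimpleGraph.Walk.cons hab.symm
      (((walkArc hC y a).reverse).append (SimpleGraph.Walk.cons hxy.symm
        SimpleGraph.Walk.nil))) with hW
  have hWlen : W.length = (dC a b - dC a x) + (n - dC a y) + 2 := by
    rw [hW]
    rw [SimpleGraph.Walk.length_append, SimpleGraph.Walk.length_cons,
      SimpleGraph.Walk.length_append, SimpleGraph.Walk.length_reverse,
      SimpleGraph.Walk.length_cons, SimpleGraph.Walk.length_nil,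
      walkArc_length, walkArc_length]
    omega
  have hWedges : W.edges = (walkArc hC x b).edges ++
      (s(b, a) :: ((walkArc hC y a).edges.reverse ++ [s(y, x)])) := by
    rw [hW, SimpleGraph.Walk.edges_append, SimpleGraph.Walk.edges_cons,
      SimpleGraph.Walk.edges_append, SimpleGraph.Walk.edges_reverse,
      SimpleGraph.Walk.edges_cons, SimpleGraph.Walk.edges_nil]
  have hdisj : ∀ e, e ∈ (walkArc hC x b).edges → e ∈ (walkArc hC y a).edges → False := by
    intro e hex hey
    obtain ⟨i, hi, rfl⟩ := mem_walkArc_edges hC hex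
    obtain ⟨j, hj, hj'⟩ := mem_walkArc_edges hC hey
    have heq : x + (i:ZMod n) = y + (j:ZMod n) := std_inj hn3 hj'
    rw [hdxb] at hi
    rw [hdya] at hj
    have e1 : dC a (x + (i:ℕ)) = dC a x + i := dC_offset (by omega)
    have e2 : dC a (y + (j:ℕ)) = dC a y + j := dC_offset (by omega)
    rw [heq, e2] at e1
    omega
  have hsab : s(a, b) ∉ (walkArc hC x b).edges := fun h => hab_std (walkArc_edges_std hC h)
  have hsab' : s(a, b) ∉ (walkArc hC y a).edges := fun h => hab_std (walkArc_edges_std hC h)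
  have hsxy : s(x, y) ∉ (walkArc hC x b).edges := fun h => hxy_std (walkArc_edges_std hC h)
  have hsxy' : s(x, y) ∉ (walkArc hC y a).edges := fun h => hxy_std (walkArc_edges_std hC h)
  have hchne : s(b, a) ≠ s(y, x) := by
    intro h
    rcases Sym2.eq_iff.mp h with ⟨hb, ha⟩ | ⟨hb, ha⟩
    · exact hby hb
    · exact hbx hb
  refine ⟨x, W, ?_, ?_, hWlen⟩
  · constructor
    · constructor
      · constructor
        rw [hWedges]
        rw [List.nodup_append', List.nodup_cons, List.nodup_append']
        refine ⟨walkArc_edges_nodup hC hn3 x b,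
          ⟨?_, List.nodup_reverse.mpr (walkArc_edges_nodup hC hn3 y a),
            List.nodup_singleton _, ?_⟩, ?_⟩
        · -- s(b,a) ∉ rest
          simp only [List.mem_append, List.mem_reverse, List.mem_singleton]
          rintro (h | h)
          · rw [Sym2.eq_swap] at h
            exact hsab' h
          · exact hchne h
        · -- disjoint reverse vs [s(y,x)]
          intro e he he'
          simp only [List.mem_reverse] at he
          simp only [List.mem_singleton] at he'
          subst he'
          rw [Sym2.eq_swap] at he
          exact hsxy' he
        · -- disjoint E1 vs rest
          intro e he he'
          simp only [List.mem_cons, List.mem_append, List.mem_reverse,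
            List.mem_singleton] at he'
          rcases he' with h | h | h | h
          · subst h
            rw [Sym2.eq_swap] at he
            exact hsab he
          · exact hdisj e he h
          · subst h
            rw [Sym2.eq_swap] at he
            exact hsxy he
          · exact absurd h List.not_mem_nil
      · -- ne nil
        intro h
        have := congrArg SimpleGraph.Walk.length h
        rw [hWlen, SimpleGraph.Walk.length_nil] at this
        omega
    · -- support tail nodup
      have hsupp : W.support = (walkArc hC x b).support ++
          (((walkArc hC y a).support.reverse) ++ [x]) := by
        rw [hW, SimpleGraph.Walk.support_append, SimpleGraph.Walk.support_cons,
          List.tail_cons, SimpleGraph.Walk.support_append,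
          SimpleGraph.Walk.support_reverse, SimpleGraph.Walk.support_cons,
          SimpleGraph.Walk.support_nil, List.tail_cons]
      have hS1 := walkArc_support_nodup hC x b
      have hS1c := SimpleGraph.Walk.support_eq_cons (walkArc hC x b)
      have htail : W.support.tail = (walkArc hC x b).support.tail ++
          (((walkArc hC y a).support.reverse) ++ [x]) := by
        conv_lhs => rw [hsupp, hS1c]
        rfl
      rw [htail]
      rw [List.nodup_append', List.nodup_append']
      have hnotxS2 : x ∉ (walkArc hC y a).support := by
        intro hmem
        have := (mem_walkArc_support hC).mp hmem
        omega
      refine ⟨?_, ⟨List.nodup_reverse.mpr (walkArc_support_nodup hC y a),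
        List.nodup_singleton _, ?_⟩, ?_⟩
      · rw [hS1c] at hS1
        exact (List.nodup_cons.mp hS1).2
      · intro v hv hv'
        simp only [List.mem_reverse] at hv
        simp only [List.mem_singleton] at hv'
        subst hv'
        exact hnotxS2 hv
      · -- disjoint S1.tail vs rest
        intro v hv hv'
        have hvS1 : v ∈ (walkArc hC x b).support := by
          rw [hS1c]; exact List.mem_cons_of_mem _ hv
        have hvx : v ≠ x := by
          intro h
          subst h
          rw [hS1c] at hS1
          exact (List.nodup_cons.mp hS1).1 hv
        simp only [List.mem_append, List.mem_reverse, List.mem_singleton] at hv'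
        rcases hv' with h | h
        · -- v in both arcs
          have m1 := (mem_walkArc_support hC).mp hvS1
          have m2 := (mem_walkArc_support hC).mp h
          rw [hdxb] at m1
          rw [hdya] at m2
          have hdav : dC a v < n := dC_lt a v
          have hxv : dC x v < n := dC_lt x v
          have hyv : dC y v < n := dC_lt y v
          rcases dC_add_dC a x v with e1 | e1 <;> rcases dC_add_dC a y v with e2 | e2 <;> omega
        · exact hvx h
  · intro h
    have : s(b, a) ∈ {e | e ∈ W.edges} := by
      rw [hWedges]
      simp
    rw [h] at this
    obtain ⟨i, hi⟩ := this
    rw [Sym2.eq_swap] at hi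
    exact hab_std (hi ▸ ⟨i, rfl⟩)
end TwoChord

section Mirsky

open Classical in
lemma mirsky {α : Type*} [DecidableEq α] (S : Finset α) (r : α → α → Prop)
    (htr : ∀ {u v w}, r u v → r v w → r u w) (hirr : ∀ u, ¬ r u u) :
    ∃ Ch An : Finset α, Ch ⊆ S ∧ An ⊆ S ∧
      (∀ e ∈ Ch, ∀ e' ∈ Ch, e ≠ e' → r e e' ∨ r e' e) ∧
      (∀ e ∈ An, ∀ e' ∈ An, e ≠ e' → ¬ r e e' ∧ ¬ r e' e) ∧
      S.card ≤ Ch.card * An.card := by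
  classical
  rcases S.eq_empty_or_nonempty with rfl | hSne
  · exact ⟨∅, ∅, Finset.Subset.refl _, Finset.Subset.refl _,
      by simp, by simp, by simp⟩
  set chainP : Finset α → Prop :=
    fun T => ∀ e ∈ T, ∀ e' ∈ T, e ≠ e' → r e e' ∨ r e' e with hchainP
  set chainsets : Finset (Finset α) := S.powerset.filter chainP with hcs
  have hcs_ne : chainsets.Nonempty := by
    refine ⟨∅, ?_⟩
    rw [hcs, Finset.mem_filter]
    exact ⟨Finset.empty_mem_powerset _, by intro e he; simp at he⟩
  obtain ⟨Ch, hChmem, hChmax⟩ := Finset.exists_max_image chainsets Finset.card hcs_ne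
  rw [hcs, Finset.mem_filter, Finset.mem_powerset] at hChmem
  obtain ⟨hChsub, hChchain⟩ := hChmem
  set H := Ch.card with hH
  have hchain_le : ∀ T : Finset α, T ⊆ S → chainP T → T.card ≤ H := by
    intro T hTS hTc
    apply hChmax
    rw [hcs, Finset.mem_filter, Finset.mem_powerset]
    exact ⟨hTS, hTc⟩
  -- height function
  set endP : α → Finset α → Prop :=
    fun a T => chainP T ∧ a ∈ T ∧ ∀ x ∈ T, x ≠ a → r x a with hendP
  set hgt : α → ℕ := fun a => ((S.powerset.filter (endP a)).sup Finset.card) with hhgt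
  have hsingle : ∀ a ∈ S, ({a} : Finset α) ∈ S.powerset.filter (endP a) := by
    intro a ha
    rw [Finset.mem_filter, Finset.mem_powerset]
    refine ⟨Finset.singleton_subset_iff.mpr ha, ?_, Finset.mem_singleton_self a, ?_⟩
    · intro e he e' he' hne
      rw [Finset.mem_singleton] at he he'
      exact absurd (he.trans he'.symm) hne
    · intro x hx hxa
      rw [Finset.mem_singleton] at hx
      exact absurd hx hxa
  have hgt_pos : ∀ a ∈ S, 1 ≤ hgt a := by
    intro a ha
    have h := Finset.le_sup (f := Finset.card) (hsingle a ha)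
    rw [Finset.card_singleton] at h
    exact h
  have hgt_le : ∀ a, hgt a ≤ H := by
    intro a
    rw [hhgt]
    apply Finset.sup_le
    intro T hT
    rw [Finset.mem_filter, Finset.mem_powerset] at hT
    exact hchain_le T hT.1 hT.2.1
  have hgt_lt : ∀ a ∈ S, ∀ b ∈ S, r a b → hgt a < hgt b := by
    intro a ha b hb hrab
    obtain ⟨T, hTmem, hTsup⟩ := Finset.exists_mem_eq_sup (S.powerset.filter (endP a))
      ⟨{a}, hsingle a ha⟩ Finset.card
    rw [Finset.mem_filter, Finset.mem_powerset] at hTmem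
    obtain ⟨hTS, hTchain, haT, hTmax⟩ := hTmem
    have hbT : b ∉ T := by
      intro hbT
      rcases eq_or_ne b a with rfl | hba
      · exact hirr b hrab
      · exact hirr a (htr hrab (hTmax b hbT hba))
    have hT' : insert b T ∈ S.powerset.filter (endP b) := by
      rw [Finset.mem_filter, Finset.mem_powerset]
      refine ⟨Finset.insert_subset hb hTS, ?_, Finset.mem_insert_self b T, ?_⟩
      · intro e he e' he' hne
        rw [Finset.mem_insert] at he he'
        rcases he with rfl | he <;> rcases he' with rfl | he'
        · exact absurd rfl hne
        · -- e = b, e' ∈ T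
          right
          rcases eq_or_ne e' a with rfl | h'
          · exact hrab
          · exact htr (hTmax e' he' h') hrab
        · -- e ∈ T, e' = b
          left
          rcases eq_or_ne e a with rfl | h'
          · exact hrab
          · exact htr (hTmax e he h') hrab
        · exact hTchain e he e' he' hne
      · intro x hx hxb
        rw [Finset.mem_insert] at hx
        rcases hx with rfl | hx
        · exact absurd rfl hxb
        · rcases eq_or_ne x a with rfl | h'
          · exact hrab
          · exact htr (hTmax x hx h') hrab
    have hins := Finset.le_sup (f := Finset.card) hT'
    rw [Finset.card_insert_of_notMem hbT] at hins
    have ha' : hgt a = T.card := hTsup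
    have hb' : T.card + 1 ≤ hgt b := hins
    omega
  -- pigeonhole
  set V := S.image hgt with hV
  have hVsub : V ⊆ Finset.Icc 1 H := by
    intro v hv
    rw [hV, Finset.mem_image] at hv
    obtain ⟨a, ha, rfl⟩ := hv
    rw [Finset.mem_Icc]
    exact ⟨hgt_pos a ha, hgt_le a⟩
  have hVcard : V.card ≤ H := le_trans (Finset.card_le_card hVsub) (by simp)
  have hVne : V.Nonempty := hSne.image hgt
  obtain ⟨v, hvV, hvmax⟩ := Finset.exists_max_image V
    (fun v => (S.filter (fun a => hgt a = v)).card) hVne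
  refine ⟨Ch, S.filter (fun a => hgt a = v), hChsub, Finset.filter_subset _ _,
    hChchain, ?_, ?_⟩
  · intro e he e' he' hne
    rw [Finset.mem_filter] at he he'
    constructor
    · intro hr
      have := hgt_lt e he.1 e' he'.1 hr
      omega
    · intro hr
      have := hgt_lt e' he'.1 e he.1 hr
      omega
  · have hsum := Finset.card_eq_sum_card_fiberwise (f := hgt) (s := S) (t := V)
      (fun a ha => Finset.mem_image_of_mem hgt ha)
    have hle := Finset.sum_le_card_nsmul V (fun v => (S.filter (fun a => hgt a = v)).card)
      ((S.filter (fun a => hgt a = v)).card) (fun x hx => hvmax x hx)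
    rw [smul_eq_mul] at hle
    calc S.card = _ := hsum
      _ ≤ V.card * (S.filter (fun a => hgt a = v)).card := hle
      _ ≤ H * (S.filter (fun a => hgt a = v)).card := by
          apply Nat.mul_le_mul_right
          exact hVcard
      _ = Ch.card * (S.filter (fun a => hgt a = v)).card := rfl

end Mirsky

section Geometry
variable {n : ℕ} [NeZero n]

lemma posL_lt (f0 v : ZMod n) : posL f0 v < n := dC_lt _ _

lemma posL_inj {f0 u v : ZMod n} (h : posL f0 u = posL f0 v) : u = v := dC_inj_left h

lemma posL_base (f0 : ZMod n) : posL f0 (f0 + 1) = 0 := dC_self _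

lemma posL_f0 (hn3 : 3 ≤ n) (f0 : ZMod n) : posL f0 f0 = n - 1 := by
  have h1 : dC f0 (f0 + 1) = 1 := by
    have hv : ((1:ℕ) : ZMod n).val = 1 := ZMod.val_natCast_of_lt (by omega)
    have he : f0 + 1 - f0 = ((1:ℕ) : ZMod n) := by push_cast; ring
    unfold dC
    rw [he, hv]
  have hne : f0 ≠ f0 + 1 := by
    intro h
    have : dC f0 (f0 + 1) = 0 := by rw [← h, dC_self]
    omega
  have := dC_comp hne
  unfold posL
  omega

lemma dC_pos_cases (f0 u v : ZMod n) :
    (posL f0 u ≤ posL f0 v ∧ dC u v = posL f0 v - posL f0 u) ∨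
    (posL f0 v < posL f0 u ∧ dC u v = n - posL f0 u + posL f0 v) := by
  have h := dC_add_dC (f0 + 1) u v
  have b1 : posL f0 u < n := posL_lt f0 u
  have b2 : posL f0 v < n := posL_lt f0 v
  have b3 : dC u v < n := dC_lt u v
  unfold posL at *
  omega

lemma exists_pos (f0 : ZMod n) {p : ℕ} (hp : p < n) : ∃ v : ZMod n, posL f0 v = p :=
  ⟨f0 + 1 + (p : ℕ), dC_add_nat hp⟩

lemma interiorD_eq (hn3 : 3 ≤ n) {f0 a b : ZMod n} (hne : a ≠ b)
    (hstd : s(a, b) ∉ stdEdges n) :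
    interiorD f0 a b = {v | posL f0 v ≤ min (posL f0 a) (posL f0 b) ∨
      max (posL f0 a) (posL f0 b) ≤ posL f0 v} := by
  have hcd := chord_dist hne hstd
  have hcomp := dC_comp hne
  have hpa : posL f0 a < n := posL_lt f0 a
  have hpb : posL f0 b < n := posL_lt f0 b
  have hf0 := posL_f0 hn3 f0
  have hf1 := posL_base f0
  have hab := dC_pos_cases f0 a b
  have hba := dC_pos_cases f0 b a
  have haf0 := dC_pos_cases f0 a f0
  have haf1 := dC_pos_cases f0 a (f0 + 1)
  have hpane : posL f0 a ≠ posL f0 b := fun h => hne (posL_inj h)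
  ext v
  have hav := dC_pos_cases f0 a v
  have hbv := dC_pos_cases f0 b v
  have hpv : posL f0 v < n := posL_lt f0 v
  rw [interiorD]
  split_ifs with hcond
  · simp only [arc, Set.mem_setOf_eq]
    omega
  · simp only [arc, Set.mem_setOf_eq]
    omega

lemma QRel_iff {f0 : ZMod n} {e e' : ZMod n × ZMod n} :
    QRel f0 e e' ↔ max (posL f0 e.1) (posL f0 e.2) < min (posL f0 e'.1) (posL f0 e'.2) := by
  unfold QRel
  omega

lemma PRel_of_nested (hn3 : 3 ≤ n) {f0 : ZMod n} {e e' : ZMod n × ZMod n}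
    (he1 : e.1 ≠ e.2) (he2 : s(e.1, e.2) ∉ stdEdges n)
    (he1' : e'.1 ≠ e'.2) (he2' : s(e'.1, e'.2) ∉ stdEdges n)
    (hl : min (posL f0 e.1) (posL f0 e.2) < min (posL f0 e'.1) (posL f0 e'.2))
    (hr : max (posL f0 e'.1) (posL f0 e'.2) < max (posL f0 e.1) (posL f0 e.2)) :
    PRel f0 e e' := by
  unfold PRel
  rw [interiorD_eq hn3 he1 he2, interiorD_eq hn3 he1' he2']
  rw [Set.ssubset_def]
  constructor
  · intro v hv
    simp only [Set.mem_setOf_eq] at hv ⊢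
    omega
  · intro hsub
    have hlt : min (posL f0 e'.1) (posL f0 e'.2) < n := by
      have := posL_lt f0 e'.1; omega
    obtain ⟨w, hw⟩ := exists_pos f0 hlt
    have hmm : max (posL f0 e'.1) (posL f0 e'.2) ≤ max (posL f0 e.1) (posL f0 e.2) := le_of_lt hr
    have hminmax' : min (posL f0 e'.1) (posL f0 e'.2) < max (posL f0 e'.1) (posL f0 e'.2) := by
      have h1 : posL f0 e'.1 ≠ posL f0 e'.2 := fun h => he1' (posL_inj h)
      omega
    have hwmem : w ∈ {v | posL f0 v ≤ min (posL f0 e'.1) (posL f0 e'.2) ∨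
        max (posL f0 e'.1) (posL f0 e'.2) ≤ posL f0 v} := by
      simp only [Set.mem_setOf_eq]; omega
    have := hsub hwmem
    simp only [Set.mem_setOf_eq] at this
    omega

lemma cross_classify (hn3 : 3 ≤ n) {f0 : ZMod n} {e e' : ZMod n × ZMod n}
    (he1 : e.1 ≠ e.2) (he2 : s(e.1, e.2) ∉ stdEdges n)
    (he1' : e'.1 ≠ e'.2) (he2' : s(e'.1, e'.2) ∉ stdEdges n)
    (hd1 : e.1 ≠ e'.1) (hd2 : e.1 ≠ e'.2) (hd3 : e.2 ≠ e'.1) (hd4 : e.2 ≠ e'.2)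
    (hnP : ¬ PRel f0 e e') (hnP' : ¬ PRel f0 e' e)
    (hnQ : ¬ QRel f0 e e') (hnQ' : ¬ QRel f0 e' e) :
    (min (posL f0 e.1) (posL f0 e.2) < min (posL f0 e'.1) (posL f0 e'.2) ∧
     min (posL f0 e'.1) (posL f0 e'.2) < max (posL f0 e.1) (posL f0 e.2) ∧
     max (posL f0 e.1) (posL f0 e.2) < max (posL f0 e'.1) (posL f0 e'.2)) ∨
    (min (posL f0 e'.1) (posL f0 e'.2) < min (posL f0 e.1) (posL f0 e.2) ∧
     min (posL f0 e.1) (posL f0 e.2) < max (posL f0 e'.1) (posL f0 e'.2) ∧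
     max (posL f0 e'.1) (posL f0 e'.2) < max (posL f0 e.1) (posL f0 e.2)) := by
  have hA : ¬ (min (posL f0 e'.1) (posL f0 e'.2) < min (posL f0 e.1) (posL f0 e.2) ∧
      max (posL f0 e.1) (posL f0 e.2) < max (posL f0 e'.1) (posL f0 e'.2)) := by
    rintro ⟨h1, h2⟩
    exact hnP' (PRel_of_nested hn3 he1' he2' he1 he2 h1 h2)
  have hB : ¬ (min (posL f0 e.1) (posL f0 e.2) < min (posL f0 e'.1) (posL f0 e'.2) ∧
      max (posL f0 e'.1) (posL f0 e'.2) < max (posL f0 e.1) (posL f0 e.2)) := by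
    rintro ⟨h1, h2⟩
    exact hnP (PRel_of_nested hn3 he1 he2 he1' he2' h1 h2)
  have hC : ¬ (max (posL f0 e.1) (posL f0 e.2) < min (posL f0 e'.1) (posL f0 e'.2)) :=
    fun h => hnQ (QRel_iff.mpr h)
  have hD : ¬ (max (posL f0 e'.1) (posL f0 e'.2) < min (posL f0 e.1) (posL f0 e.2)) :=
    fun h => hnQ' (QRel_iff.mpr h)
  have p1 : posL f0 e.1 ≠ posL f0 e.2 := fun h => he1 (posL_inj h)
  have p2 : posL f0 e'.1 ≠ posL f0 e'.2 := fun h => he1' (posL_inj h)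
  have q1 : posL f0 e.1 ≠ posL f0 e'.1 := fun h => hd1 (posL_inj h)
  have q2 : posL f0 e.1 ≠ posL f0 e'.2 := fun h => hd2 (posL_inj h)
  have q3 : posL f0 e.2 ≠ posL f0 e'.1 := fun h => hd3 (posL_inj h)
  have q4 : posL f0 e.2 ≠ posL f0 e'.2 := fun h => hd4 (posL_inj h)
  omega

end Geometry

section QChain
variable {n : ℕ} [NeZero n]

lemma PRel_trans {f0 : ZMod n} {e1 e2 e3 : ZMod n × ZMod n}
    (h1 : PRel f0 e1 e2) (h2 : PRel f0 e2 e3) : PRel f0 e1 e3 := h1.trans h2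

lemma PRel_irrefl {f0 : ZMod n} (e : ZMod n × ZMod n) : ¬ PRel f0 e e :=
  fun h => h.2 h.1

lemma QRel_trans {f0 : ZMod n} {e1 e2 e3 : ZMod n × ZMod n}
    (h1 : QRel f0 e1 e2) (h2 : QRel f0 e2 e3) : QRel f0 e1 e3 := by
  unfold QRel at *
  omega

lemma QRel_irrefl {f0 : ZMod n} (e : ZMod n × ZMod n) : ¬ QRel f0 e e := by
  unfold QRel
  omega

/-- span of a chord in the linear order -/
def spanP {n : ℕ} (f0 : ZMod n) (e : ZMod n × ZMod n) : ℕ :=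
  max (posL f0 e.1) (posL f0 e.2) - min (posL f0 e.1) (posL f0 e.2)

lemma chainQ_span_sum (f0 : ZMod n) (A : Finset (ZMod n × ZMod n))
    (hchain : ∀ e ∈ A, ∀ e' ∈ A, e ≠ e' → QRel f0 e e' ∨ QRel f0 e' e) :
    ∀ N : ℕ, (∀ e ∈ A, max (posL f0 e.1) (posL f0 e.2) ≤ N) →
    (∑ e ∈ A, spanP f0 e) ≤ N := by
  classical
  induction A using Finset.strongInduction with
  | _ A ih =>
    intro N hbound
    rcases A.eq_empty_or_nonempty with rfl | hne
    · simp
    obtain ⟨em, hem, hmaxm⟩ := Finset.exists_max_image A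
      (fun e => min (posL f0 e.1) (posL f0 e.2)) hne
    have hrest : ∀ e ∈ A.erase em, max (posL f0 e.1) (posL f0 e.2)
        ≤ min (posL f0 em.1) (posL f0 em.2) := by
      intro e he
      have hene := Finset.ne_of_mem_erase he
      have heA := Finset.mem_of_mem_erase he
      rcases hchain e heA em hem hene with h | h
      · have := QRel_iff.mp h
        omega
      · have := QRel_iff.mp h
        have := hmaxm e heA
        omega
    have hih := ih (A.erase em) (Finset.erase_ssubset hem)
      (fun e he e' he' hne' => hchain e (Finset.mem_of_mem_erase he)
        e' (Finset.mem_of_mem_erase he') hne')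
      (min (posL f0 em.1) (posL f0 em.2)) hrest
    have hsum : ∑ e ∈ A, spanP f0 e = spanP f0 em + ∑ e ∈ A.erase em, spanP f0 e :=
      (Finset.add_sum_erase A (spanP f0) hem).symm
    have hbm := hbound em hem
    have : spanP f0 em = max (posL f0 em.1) (posL f0 em.2)
        - min (posL f0 em.1) (posL f0 em.2) := rfl
    omega

section MoreoverQ
variable {n : ℕ}

lemma normalize_chord {n : ℕ} [NeZero n] {G : SimpleGraph (ZMod n)} (f0 : ZMod n)
    {e : ZMod n × ZMod n} (he : IsChordPair G e.1 e.2) :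
    ∃ u v : ZMod n, G.Adj u v ∧ s(u, v) ∉ stdEdges n ∧
      posL f0 u = min (posL f0 e.1) (posL f0 e.2) ∧
      posL f0 v = max (posL f0 e.1) (posL f0 e.2) := by
  obtain ⟨hadj, hstd⟩ := he
  rcases le_total (posL f0 e.1) (posL f0 e.2) with h | h
  · exact ⟨e.1, e.2, hadj, hstd, by omega, by omega⟩
  · refine ⟨e.2, e.1, hadj.symm, ?_, by omega, by omega⟩
    rwa [Sym2.eq_swap]

lemma moreoverQ {G : SimpleGraph (ZMod n)} (hn : 3 ≤ n)
    (hC : ∀ i : ZMod n, G.Adj i (i + 1)) (f0 : ZMod n)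
    (S : Finset (ZMod n × ZMod n)) (hS : IndepChords G S)
    (x : ℝ) (hx1 : 1 ≤ x)
    (A : Finset (ZMod n × ZMod n)) (hAS : A ⊆ S) (hAcard : x ≤ (A.card : ℝ))
    (hchain : IsChainQ f0 A) :
    HasNontrivialCycleOfLength G ((n : ℝ) - (n : ℝ) / x) := by
  haveI : NeZero n := ⟨by omega⟩
  have hx0 : 0 < x := lt_of_lt_of_le zero_lt_one hx1
  have hAne : A.Nonempty := by
    rw [← Finset.card_pos]
    by_contra h
    push_neg at h
    have h0 : A.card = 0 := by omega
    rw [h0] at hAcard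
    norm_num at hAcard
    linarith
  obtain ⟨e0, he0, hmin⟩ := Finset.exists_min_image A (spanP f0) hAne
  have hsum := chainQ_span_sum f0 A hchain (n - 1)
    (fun e he => by
      have h1 := posL_lt f0 e.1
      have h2 := posL_lt f0 e.2
      omega)
  have hns : A.card • spanP f0 e0 ≤ ∑ e ∈ A, spanP f0 e :=
    Finset.card_nsmul_le_sum A (spanP f0) _ (fun e he => hmin e he)
  have hkspan : A.card * spanP f0 e0 ≤ n - 1 := by
    rw [smul_eq_mul] at hns
    omega
  -- build the cycle from chord e0
  obtain ⟨u, v, hadj, hstd, hu, hv⟩ := normalize_chord f0 (hS.1 e0 (hAS he0))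
  have hduv : dC u v = spanP f0 e0 := by
    have h := dC_pos_cases f0 u v
    have := posL_lt f0 u
    have := posL_lt f0 v
    have hmm : min (posL f0 e0.1) (posL f0 e0.2) ≤ max (posL f0 e0.1) (posL f0 e0.2) := by omega
    unfold spanP
    omega
  obtain ⟨w, W, hWc, hWne, hWlen⟩ := cycle_one hC hn hadj hstd
  refine ⟨w, W, hWc, hWne, ?_⟩
  rw [hWlen, hduv]
  have hsp_lt : spanP f0 e0 < n := by
    have := chord_dist hadj.ne hstd
    have := dC_lt u v
    omega
  have hAcpos : 0 < (A.card : ℝ) := lt_of_lt_of_le hx0 hAcard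
  have hreal : (spanP f0 e0 : ℝ) * (A.card : ℝ) ≤ (n : ℝ) := by
    have : (A.card * spanP f0 e0 : ℕ) ≤ n := by omega
    calc (spanP f0 e0 : ℝ) * (A.card : ℝ) = ((A.card * spanP f0 e0 : ℕ) : ℝ) := by
          push_cast; ring
      _ ≤ (n : ℝ) := by exact_mod_cast this
  have hspan_le : (spanP f0 e0 : ℝ) ≤ (n : ℝ) / x := by
    rw [le_div_iff₀ hx0]
    calc (spanP f0 e0 : ℝ) * x ≤ (spanP f0 e0 : ℝ) * (A.card : ℝ) := by
          apply mul_le_mul_of_nonneg_left hAcard (by positivity)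
      _ ≤ (n : ℝ) := hreal
  have hcast : ((n - spanP f0 e0 + 1 : ℕ) : ℝ) = (n : ℝ) - (spanP f0 e0 : ℝ) + 1 := by
    push_cast [Nat.cast_sub (le_of_lt hsp_lt)]
    ring
  rw [hcast]
  linarith

end MoreoverQ

section MoreoverAC
variable {n : ℕ}

set_option maxHeartbeats 2000000 in
lemma moreoverAC {G : SimpleGraph (ZMod n)} (hn : 3 ≤ n)
    (hC : ∀ i : ZMod n, G.Adj i (i + 1)) (f0 : ZMod n)
    (S : Finset (ZMod n × ZMod n)) (hS : IndepChords G S)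
    (x : ℝ) (hx1 : 1 ≤ x)
    (A : Finset (ZMod n × ZMod n)) (hAS : A ⊆ S) (hAcard : x ≤ (A.card : ℝ))
    (hAP : IsAntichainP f0 A) (hAQ : IsAntichainQ f0 A) :
    HasNontrivialCycleOfLength G ((n : ℝ) - (n : ℝ) / x) := by
  classical
  haveI : NeZero n := ⟨by omega⟩
  have hx0 : 0 < x := lt_of_lt_of_le zero_lt_one hx1
  set k := A.card with hk
  have hk1 : 1 ≤ k := by
    by_contra h
    have h0 : k = 0 := by omega
    rw [h0] at hAcard
    norm_num at hAcard
    linarith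
  by_cases hk2 : 2 ≤ k
  swap
  · -- k = 1, so x = 1 and the bound is 0
    have hkk : k = 1 := by omega
    have hxle : x ≤ 1 := by rw [hkk] at hAcard; exact_mod_cast hAcard
    have hxeq : x = 1 := le_antisymm hxle hx1
    have hAne : A.Nonempty := Finset.card_pos.mp (by omega)
    obtain ⟨e0, he0⟩ := hAne
    obtain ⟨hadj, hstd⟩ := hS.1 e0 (hAS he0)
    obtain ⟨w, W, hWc, hWne, hWlen⟩ := cycle_one hC hn hadj hstd
    refine ⟨w, W, hWc, hWne, ?_⟩
    rw [hxeq]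
    have : (0:ℝ) ≤ (W.length : ℝ) := by positivity
    simp only [div_one]
    linarith
  -- main case k ≥ 2
  set key : ZMod n × ZMod n → ℕ := fun e => min (posL f0 e.1) (posL f0 e.2) with hkey
  set rmax : ZMod n × ZMod n → ℕ := fun e => max (posL f0 e.1) (posL f0 e.2) with hrmax
  have hinj : Set.InjOn key A := by
    intro e he e' he' hkeq
    by_contra hne
    obtain ⟨d1, d2, d3, d4⟩ := hS.2 e (hAS he) e' (hAS he') hne
    have q1 : posL f0 e.1 ≠ posL f0 e'.1 := fun h => d1 (posL_inj h)
    have q2 : posL f0 e.1 ≠ posL f0 e'.2 := fun h => d2 (posL_inj h)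
    have q3 : posL f0 e.2 ≠ posL f0 e'.1 := fun h => d3 (posL_inj h)
    have q4 : posL f0 e.2 ≠ posL f0 e'.2 := fun h => d4 (posL_inj h)
    rw [hkey] at hkeq
    simp only at hkeq
    omega
  set B := A.image key with hB
  have hBcard : B.card = k := by
    rw [hB, Finset.card_image_of_injOn hinj]
  set emb := B.orderEmbOfFin hBcard with hemb
  have hcex : ∀ i : Fin k, ∃ e, e ∈ A ∧ key e = emb i := by
    intro i
    have hmem : emb i ∈ B := Finset.orderEmbOfFin_mem B hBcard i
    rw [hB, Finset.mem_image] at hmem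
    obtain ⟨e, he, hke⟩ := hmem
    exact ⟨e, he, hke⟩
  set c : Fin k → ZMod n × ZMod n := fun i => (hcex i).choose with hc
  have hcA : ∀ i, c i ∈ A := fun i => (hcex i).choose_spec.1
  have hckey : ∀ i, key (c i) = emb i := fun i => (hcex i).choose_spec.2
  have hkeymono : ∀ i j : Fin k, i < j → key (c i) < key (c j) := by
    intro i j hij
    rw [hckey i, hckey j]
    exact (B.orderEmbOfFin hBcard).strictMono hij
  have hcne : ∀ i j : Fin k, i < j → c i ≠ c j := by
    intro i j hij h
    have := hkeymono i j hij
    rw [h] at this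
    omega
  have hcross : ∀ i j : Fin k, i < j →
      key (c i) < key (c j) ∧ key (c j) < rmax (c i) ∧ rmax (c i) < rmax (c j) := by
    intro i j hij
    have h1 := hkeymono i j hij
    have hne := hcne i j hij
    obtain ⟨d1, d2, d3, d4⟩ := hS.2 (c i) (hAS (hcA i)) (c j) (hAS (hcA j)) hne
    obtain ⟨hadj1, hstd1⟩ := hS.1 (c i) (hAS (hcA i))
    obtain ⟨hadj2, hstd2⟩ := hS.1 (c j) (hAS (hcA j))
    obtain ⟨hP1, hP2⟩ := hAP (c i) (hcA i) (c j) (hcA j) hne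
    obtain ⟨hQ1, hQ2⟩ := hAQ (c i) (hcA i) (c j) (hcA j) hne
    rcases cross_classify hn hadj1.ne hstd1 hadj2.ne hstd2 d1 d2 d3 d4 hP1 hP2 hQ1 hQ2 with
      ⟨g1, g2, g3⟩ | ⟨g1, g2, g3⟩
    · exact ⟨h1, g2, g3⟩
    · exact absurd (show key (c j) < key (c i) from g1)
        (not_lt.mpr (le_of_lt (hkeymono i j hij)))
  -- numeric sequences
  set lv : ℕ → ℕ := fun i => if h : i < k then key (c ⟨i, h⟩) else 0 with hlv
  set rv : ℕ → ℕ := fun i => if h : i < k then rmax (c ⟨i, h⟩) else 0 with hrv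
  have hlv_eq : ∀ i (h : i < k), lv i = key (c ⟨i, h⟩) := fun i h => dif_pos h
  have hrv_eq : ∀ i (h : i < k), rv i = rmax (c ⟨i, h⟩) := fun i h => dif_pos h
  have hlvrv : ∀ i (h : i < k), lv i < rv i := by
    intro i h
    rw [hlv_eq i h, hrv_eq i h]
    have hadj := (hS.1 (c ⟨i, h⟩) (hAS (hcA _))).1
    have : posL f0 (c ⟨i, h⟩).1 ≠ posL f0 (c ⟨i, h⟩).2 := fun hp => hadj.ne (posL_inj hp)
    rw [hkey, hrmax]
    simp only
    omega
  have hrv_lt : ∀ i (h : i < k), rv i < n := by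
    intro i h
    rw [hrv_eq i h, hrmax]
    have := posL_lt f0 (c ⟨i, h⟩).1
    have := posL_lt f0 (c ⟨i, h⟩).2
    simp only
    omega
  have hcross' : ∀ i j, i < j → (h : j < k) →
      lv i < lv j ∧ lv j < rv i ∧ rv i < rv j := by
    intro i j hij h
    have hik : i < k := by omega
    have := hcross ⟨i, hik⟩ ⟨j, h⟩ (by exact Fin.mk_lt_mk.mpr hij)
    rw [hlv_eq i hik, hlv_eq j h, hrv_eq i hik, hrv_eq j h]
    exact this
  -- candidate lengths
  set len : ℕ → ℝ := fun i => if i + 1 < k then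
      ((rv i : ℝ) - (lv (i+1) : ℝ)) + ((n : ℝ) - (rv (i+1) : ℝ) + (lv i : ℝ)) + 2
    else ((lv (k-1) : ℝ) - (lv 0 : ℝ)) + ((rv (k-1) : ℝ) - (rv 0 : ℝ)) + 2 with hlen
  have hsum : ∑ i ∈ Finset.range k, len i = ((k : ℝ) - 1) * ((n : ℝ) + 2) + 2 := by
    have hsplit : ∑ i ∈ Finset.range k, len i
        = ∑ i ∈ Finset.range (k-1), len i + len (k-1) := by
      have hkk : Finset.range k = Finset.range ((k-1)+1) := by
        congr 1
        omega
      rw [hkk, Finset.sum_range_succ]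
    have hbody : ∀ i ∈ Finset.range (k-1), len i
        = (((rv i : ℝ) - (rv (i+1) : ℝ)) + ((lv i : ℝ) - (lv (i+1) : ℝ))) + ((n : ℝ) + 2) := by
      intro i hi
      rw [Finset.mem_range] at hi
      rw [hlen]
      simp only
      rw [if_pos (by omega)]
      ring
    rw [hsplit, Finset.sum_congr rfl hbody]
    rw [Finset.sum_add_distrib, Finset.sum_add_distrib]
    rw [Finset.sum_range_sub' (fun i => (rv i : ℝ)), Finset.sum_range_sub' (fun i => (lv i : ℝ))]
    rw [Finset.sum_const, Finset.card_range]
    have hlast : len (k-1) = ((lv (k-1) : ℝ) - (lv 0 : ℝ)) + ((rv (k-1) : ℝ) - (rv 0 : ℝ)) + 2 := by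
      rw [hlen]
      simp only
      rw [if_neg (by omega)]
    rw [hlast, nsmul_eq_mul]
    have : ((k - 1 : ℕ) : ℝ) = (k : ℝ) - 1 := by
      have : (1:ℕ) ≤ k := hk1
      push_cast [Nat.cast_sub this]
      ring
    rw [this]
    ring
  -- pick a good candidate
  have hkR : (0:ℝ) < (k:ℝ) := by exact_mod_cast (show 0 < k by omega)
  have hex : ∃ i ∈ Finset.range k, (((k:ℝ) - 1) * ((n:ℝ) + 2) + 2) / (k:ℝ) ≤ len i := by
    by_contra hcon
    push_neg at hcon
    have hlt := Finset.sum_lt_sum_of_nonempty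
      (Finset.nonempty_range_iff.mpr (by omega)) hcon
    rw [hsum, Finset.sum_const, Finset.card_range, nsmul_eq_mul] at hlt
    rw [mul_div_cancel₀ _ (ne_of_gt hkR)] at hlt
    linarith
  obtain ⟨i, hik', havgle⟩ := hex
  rw [Finset.mem_range] at hik'
  -- construct the cycle witnessing len i
  have hcycle : ∃ (w : ZMod n) (W : G.Walk w w), W.IsCycle ∧
      {e | e ∈ W.edges} ≠ stdEdges n ∧ len i ≤ (W.length : ℝ) := by
    by_cases hi1 : i + 1 < k
    · -- consecutive pair
      obtain ⟨a, b, hab, habs, hpa, hpb⟩ := normalize_chord f0 (hS.1 (c ⟨i, by omega⟩) (hAS (hcA _)))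
      obtain ⟨p, q, hpq, hpqs, hpp, hpquf⟩ := normalize_chord f0 (hS.1 (c ⟨i+1, hi1⟩) (hAS (hcA _)))
      have hpa' : posL f0 a = lv i := by rw [hlv_eq i (by omega)]; exact hpa
      have hpb' : posL f0 b = rv i := by rw [hrv_eq i (by omega)]; exact hpb
      have hpp' : posL f0 p = lv (i+1) := by rw [hlv_eq (i+1) hi1]; exact hpp
      have hpq' : posL f0 q = rv (i+1) := by rw [hrv_eq (i+1) hi1]; exact hpquf
      obtain ⟨g1, g2, g3⟩ := hcross' i (i+1) (by omega) hi1
      have hrn := hrv_lt (i+1) hi1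
      have hrn' := hrv_lt i (by omega)
      have hd1 := dC_pos_cases f0 a p
      have hd2 := dC_pos_cases f0 a b
      have hd3 := dC_pos_cases f0 a q
      have hc1 : 0 < dC a p := by omega
      have hc2 : dC a p < dC a b := by omega
      have hc3 : dC a b < dC a q := by omega
      obtain ⟨w, W, hWc, hWne, hWlen⟩ := cycle_two hC hn hab habs hpq hpqs hc1 hc2 hc3
      refine ⟨w, W, hWc, hWne, ?_⟩
      rw [hWlen]
      have e1 : dC a b - dC a p = rv i - lv (i+1) := by omega
      have e2 : n - dC a q = n - rv (i+1) + lv i := by omega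
      rw [e1, e2]
      have hcast : (((rv i - lv (i+1)) + (n - rv (i+1) + lv i) + 2 : ℕ) : ℝ)
          = ((rv i : ℝ) - (lv (i+1) : ℝ)) + ((n : ℝ) - (rv (i+1) : ℝ) + (lv i : ℝ)) + 2 := by
        push_cast [Nat.cast_sub (le_of_lt g2), Nat.cast_sub (le_of_lt hrn)]
        ring
      have hlen_i : len i = ((rv i : ℝ) - (lv (i+1) : ℝ))
          + ((n : ℝ) - (rv (i+1) : ℝ) + (lv i : ℝ)) + 2 := by
        simp only [hlen]
        rw [if_pos hi1]
      rw [hcast, hlen_i]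
    · -- outer pair
      have hieq : i = k - 1 := by omega
      have h0k : 0 < k := by omega
      have hk1k : k - 1 < k := by omega
      obtain ⟨p1, q1, h1adj, h1std, hp1, hq1⟩ := normalize_chord f0 (hS.1 (c ⟨0, h0k⟩) (hAS (hcA _)))
      obtain ⟨p2, q2, h2adj, h2std, hp2, hq2⟩ := normalize_chord f0 (hS.1 (c ⟨k-1, hk1k⟩) (hAS (hcA _)))
      have hp1' : posL f0 p1 = lv 0 := by rw [hlv_eq 0 h0k]; exact hp1
      have hq1' : posL f0 q1 = rv 0 := by rw [hrv_eq 0 h0k]; exact hq1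
      have hp2' : posL f0 p2 = lv (k-1) := by rw [hlv_eq (k-1) hk1k]; exact hp2
      have hq2' : posL f0 q2 = rv (k-1) := by rw [hrv_eq (k-1) hk1k]; exact hq2
      obtain ⟨g1, g2, g3⟩ := hcross' 0 (k-1) (by omega) hk1k
      have hrn := hrv_lt (k-1) hk1k
      have hrn' := hrv_lt 0 h0k
      have hd1 := dC_pos_cases f0 p2 q1
      have hd2 := dC_pos_cases f0 p2 q2
      have hd3 := dC_pos_cases f0 p2 p1
      have hl0 : lv 0 < lv (k-1) := g1
      have hc1 : 0 < dC p2 q1 := by omega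
      have hc2 : dC p2 q1 < dC p2 q2 := by omega
      have hc3 : dC p2 q2 < dC p2 p1 := by omega
      have h1adj' : G.Adj q1 p1 := h1adj.symm
      have h1std' : s(q1, p1) ∉ stdEdges n := by rwa [Sym2.eq_swap]
      obtain ⟨w, W, hWc, hWne, hWlen⟩ := cycle_two hC hn h2adj h2std h1adj' h1std' hc1 hc2 hc3
      refine ⟨w, W, hWc, hWne, ?_⟩
      rw [hWlen]
      have e1 : dC p2 q2 - dC p2 q1 = rv (k-1) - rv 0 := by omega
      have e2 : n - dC p2 p1 = lv (k-1) - lv 0 := by omega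
      rw [e1, e2]
      have hcast : (((rv (k-1) - rv 0) + (lv (k-1) - lv 0) + 2 : ℕ) : ℝ)
          = ((rv (k-1) : ℝ) - (rv 0 : ℝ)) + ((lv (k-1) : ℝ) - (lv 0 : ℝ)) + 2 := by
        push_cast [Nat.cast_sub (le_of_lt g3), Nat.cast_sub (le_of_lt hl0)]
        ring
      have hlen_i : len i = ((lv (k-1) : ℝ) - (lv 0 : ℝ))
          + ((rv (k-1) : ℝ) - (rv 0 : ℝ)) + 2 := by
        simp only [hlen]
        rw [if_neg (by omega)]
      rw [hcast, hlen_i]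
      linarith
  obtain ⟨w, W, hWc, hWne, hWge⟩ := hcycle
  refine ⟨w, W, hWc, hWne, ?_⟩
  -- arithmetic: n - n/x ≤ avg ≤ len i ≤ length
  have hkx : x ≤ (k : ℝ) := hAcard
  have hdiv : (n : ℝ) / (k : ℝ) ≤ (n : ℝ) / x :=
    div_le_div_of_nonneg_left (by positivity) hx0 hkx
  have havg_eq : (((k:ℝ) - 1) * ((n:ℝ) + 2) + 2) / (k:ℝ) = (n:ℝ) + 2 - (n:ℝ)/(k:ℝ) := by
    have h2 : (n:ℝ)/(k:ℝ)*(k:ℝ) = (n:ℝ) := div_mul_cancel₀ _ (ne_of_gt hkR)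
    rw [div_eq_iff (ne_of_gt hkR)]
    linear_combination h2
  rw [havg_eq] at havgle
  linarith
end MoreoverAC

set_option maxHeartbeats 1000000 in
/-- **Claim 3.2.**  Let `G` be a graph on `n` vertices with a designated Hamiltonian
cycle, let `m ≥ 1`, `K > 0`, and let `S` be a set of `K·m` independent chords.  Then
(1) `P_S` contains a chain of size `K·m^{1/3}`, or (2) `Q_S` contains a chain of size
`m^{1/3}`, or (3) some subset of `S` of size `m^{1/3}` is an antichain in both `P_S`
and `Q_S`.  Moreover, in either of the latter two cases, `G` contains a nontrivial
cycle of length at least `n - n/m^{1/3}`. -/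
theorem chain_antichain_dichotomy
    (n m : ℕ) (G : SimpleGraph (ZMod n)) (hn : 3 ≤ n)
    (hC : ∀ i : ZMod n, G.Adj i (i + 1)) (hm : 1 ≤ m)
    (K : ℝ) (hK : 0 < K) (f0 : ZMod n)
    (S : Finset (ZMod n × ZMod n)) (hS : IndepChords G S)
    (hcard : (S.card : ℝ) = K * (m : ℝ)) :
    ((∃ A ⊆ S, K * (m : ℝ) ^ ((1 : ℝ) / 3) ≤ (A.card : ℝ) ∧ IsChainP f0 A) ∨
     (∃ A ⊆ S, (m : ℝ) ^ ((1 : ℝ) / 3) ≤ (A.card : ℝ) ∧ IsChainQ f0 A) ∨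
     (∃ A ⊆ S, (m : ℝ) ^ ((1 : ℝ) / 3) ≤ (A.card : ℝ) ∧
        IsAntichainP f0 A ∧ IsAntichainQ f0 A)) ∧
    (((∃ A ⊆ S, (m : ℝ) ^ ((1 : ℝ) / 3) ≤ (A.card : ℝ) ∧ IsChainQ f0 A) ∨
      (∃ A ⊆ S, (m : ℝ) ^ ((1 : ℝ) / 3) ≤ (A.card : ℝ) ∧
        IsAntichainP f0 A ∧ IsAntichainQ f0 A)) →
      HasNontrivialCycleOfLength G ((n : ℝ) - (n : ℝ) / (m : ℝ) ^ ((1 : ℝ) / 3))) := by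
  classical
  haveI : NeZero n := ⟨by omega⟩
  set x := (m : ℝ) ^ ((1 : ℝ) / 3) with hxdef
  have hm1 : (1 : ℝ) ≤ (m : ℝ) := by exact_mod_cast hm
  have hx1 : 1 ≤ x := by
    rw [hxdef]
    calc (1:ℝ) = (1:ℝ) ^ ((1:ℝ)/3) := (Real.one_rpow _).symm
      _ ≤ (m:ℝ) ^ ((1:ℝ)/3) := Real.rpow_le_rpow zero_le_one hm1 (by norm_num)
  have hx0 : 0 < x := lt_of_lt_of_le one_pos hx1
  have hx3 : x * x * x = (m : ℝ) := by
    have h0 : (0:ℝ) ≤ (m:ℝ) := by positivity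
    have h3 : x ^ (3:ℕ) = (m:ℝ) := by
      rw [hxdef, ← Real.rpow_natCast ((m:ℝ) ^ ((1:ℝ)/3)) 3, ← Real.rpow_mul h0]
      norm_num
    calc x*x*x = x ^ (3:ℕ) := by ring
      _ = (m:ℝ) := h3
  constructor
  · -- the chain/antichain trichotomy
    obtain ⟨Ch, An, hChS, hAnS, hChchain, hAnanti, hcard1⟩ :=
      mirsky S (PRel f0) (fun h1 h2 => PRel_trans h1 h2) PRel_irrefl
    by_cases hc1 : K * x ≤ (Ch.card : ℝ)
    · exact Or.inl ⟨Ch, hChS, hc1, hChchain⟩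
    push_neg at hc1
    obtain ⟨Ch2, An2, hCh2, hAn2, hc2chain, hc2anti, hcard2⟩ :=
      mirsky An (QRel f0) (fun h1 h2 => QRel_trans h1 h2) QRel_irrefl
    by_cases hc2 : x ≤ (Ch2.card : ℝ)
    · exact Or.inr (Or.inl ⟨Ch2, hCh2.trans hAnS, hc2, hc2chain⟩)
    push_neg at hc2
    refine Or.inr (Or.inr ⟨An2, hAn2.trans hAnS, ?_, ?_, hc2anti⟩)
    · -- x ≤ An2.card
      have hSc : (S.card : ℝ) ≤ (Ch.card : ℝ) * (An.card : ℝ) := by exact_mod_cast hcard1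
      have hAc : (An.card : ℝ) ≤ (Ch2.card : ℝ) * (An2.card : ℝ) := by exact_mod_cast hcard2
      have hAnn : (0:ℝ) ≤ (An.card : ℝ) := by positivity
      have hAn2n : (0:ℝ) ≤ (An2.card : ℝ) := by positivity
      have hKx0 : (0:ℝ) < K * x := by positivity
      have h4 : K * x * (x * x) ≤ K * x * (An.card : ℝ) := by
        have e1 : K * x * (x * x) = K * (x * x * x) := by ring
        rw [e1, hx3, ← hcard]
        calc (S.card : ℝ) ≤ (Ch.card : ℝ) * (An.card : ℝ) := hSc
          _ ≤ (K * x) * (An.card : ℝ) := mul_le_mul_of_nonneg_right (le_of_lt hc1) hAnn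
      have h5 : x * x ≤ (An.card : ℝ) := le_of_mul_le_mul_left h4 hKx0
      have h6 : x * x ≤ x * (An2.card : ℝ) := by
        calc x * x ≤ (An.card : ℝ) := h5
          _ ≤ (Ch2.card : ℝ) * (An2.card : ℝ) := hAc
          _ ≤ x * (An2.card : ℝ) := mul_le_mul_of_nonneg_right (le_of_lt hc2) hAn2n
      exact le_of_mul_le_mul_left h6 hx0
    · -- antichain in P (subset of An)
      intro e he e' he' hne
      exact hAnanti e (hAn2 he) e' (hAn2 he') hne
  · -- the moreover part
    rintro (⟨A, hAS, hAcard, hchain⟩ | ⟨A, hAS, hAcard, hAP, hAQ⟩)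
    · exact moreoverQ hn hC f0 S hS x hx1 A hAS hAcard hchain
    · exact moreoverAC hn hC f0 S hS x hx1 A hAS hAcard hAP hAQ
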